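/- If U and W are subspaces of R^n with orthonormal basis matrices V_1 (n × p) and V_2 (n × q), and M is the (p+q) × n matrix formed by stacking V_1^T and V_2^T, then the singular values σ_i of M satisfy σ_i² = 1 + cos φ_i for i ≤ min(p,q), where φ_1 ≤ ... ≤ φ_{min(p,q)} are the principal angles between U and W; equivalently φ_i = arccos(σ_i² − 1). -/

import Mathlib

open Matrix

/-- View a plain vector as an element of Euclidean space. -/
noncomputable def toEuc {n : ℕ} (v : Fin n → ℝ) : EuclideanSpace ℝ (Fin n) := WithLp.toLp 2 v

/-- The row space of a matrix, as a subspace of Euclidean space `ℝ^n`. -/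
noncomputable def rowSpace {m : Type*} {n : ℕ} (A : Matrix m (Fin n) ℝ) :
    Submodule ℝ (EuclideanSpace ℝ (Fin n)) :=
  Submodule.span ℝ (Set.range fun i => toEuc (A i))

/-- The orthogonal projection matrix onto a subspace of `ℝ^n`. -/
noncomputable def projMat {n : ℕ} (U : Submodule ℝ (EuclideanSpace ℝ (Fin n))) :
    Matrix (Fin n) (Fin n) ℝ :=
  Matrix.toEuclideanLin.symm (U.subtype ∘ₗ (Submodule.orthogonalProjectionOnto U).toLinearMap)

/-- The operator (spectral) norm of a matrix. -/
noncomputable def opNorm {m : Type*} [Fintype m] {n : ℕ} (A : Matrix m (Fin n) ℝ) : ℝ :=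
  ‖(Matrix.toEuclideanLin A).toContinuousLinearMap‖

/-- Restored helper (removed from Mathlib): `Aᵀ * A` is Hermitian over a trivial-star ring. -/
theorem Matrix.isHermitian_transpose_mul_self {α : Type*} {m n : Type*} [CommSemiring α]
    [StarRing α] [TrivialStar α] [Fintype m] (A : Matrix m n α) : (Aᵀ * A).IsHermitian := by
  rw [IsHermitian, conjTranspose_eq_transpose_of_trivial, transpose_mul, transpose_transpose]

/-- Singular values of a matrix, in ascending order. -/
noncomputable def svalAsc {m : Type*} [Fintype m] {n : ℕ} (A : Matrix m (Fin n) ℝ) :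
    Fin n → ℝ := fun i =>
  Real.sqrt ((Matrix.isHermitian_transpose_mul_self A).eigenvalues
    (Tuple.sort (Matrix.isHermitian_transpose_mul_self A).eigenvalues i))

/-- Singular values of a matrix, in descending order (`svalDesc A 0` is the largest). -/
noncomputable def svalDesc {m : Type*} [Fintype m] {n : ℕ} (A : Matrix m (Fin n) ℝ)
    (i : Fin n) : ℝ :=
  svalAsc A i.rev

section Aux
open Polynomial

lemma charpoly_map_ringHom {k : Type*} [Fintype k] [DecidableEq k] {R S : Type*} [CommRing R]
    [CommRing S] (G : Matrix k k R) (ρ : R[X] →+* S) :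
    ρ G.charpoly = (Matrix.scalar k (ρ X) - G.map (ρ.comp C)).det := by
  rw [Matrix.charpoly, RingHom.map_det]
  congr 1
  ext i j
  simp only [RingHom.mapMatrix_apply, Matrix.map_apply, charmatrix_apply, Matrix.sub_apply,
    Matrix.scalar_apply, Matrix.diagonal_apply, RingHom.comp_apply]
  split_ifs <;> simp

-- charpoly is invariant under conjugation P * A * Q with P*Q = 1 = Q*P
lemma charpoly_conj_eq {k : Type*} [Fintype k] [DecidableEq k] {R : Type*} [CommRing R]
    (P Q A : Matrix k k R) (hPQ : P * Q = 1) (hQP : Q * P = 1) :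
    (P * A * Q).charpoly = A.charpoly := by
  have hmap : ∀ (M N : Matrix k k R),
      (M * N).map (C : R →+* R[X]) = M.map C * N.map C := fun M N => Matrix.map_mul
  have h1 : charmatrix (P * A * Q) = P.map C * charmatrix A * Q.map C := by
    rw [charmatrix, charmatrix, RingHom.mapMatrix_apply, RingHom.mapMatrix_apply,
      hmap, hmap, Matrix.mul_sub, Matrix.sub_mul]
    congr 1
    have hPQ' : P.map (C : R →+* R[X]) * Q.map C = 1 := by
      rw [← hmap, hPQ, Matrix.map_one _ (map_zero C) (map_one C)]
    rw [mul_assoc, (Matrix.scalar_commute (X : R[X]) (fun r => Commute.all _ _) (Q.map C)).eq,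
      ← mul_assoc, hPQ', one_mul]
  rw [Matrix.charpoly, Matrix.charpoly, h1, Matrix.det_mul, Matrix.det_mul, mul_comm,
    ← mul_assoc, ← Matrix.det_mul, ← hmap, hQP]
  simp

lemma charpoly_diagonal {k : Type*} [Fintype k] [DecidableEq k] {R : Type*} [CommRing R]
    (d : k → R) : (diagonal d).charpoly = ∏ i, (X - C (d i)) := by
  rw [Matrix.charpoly]
  have : charmatrix (diagonal d) = diagonal fun i => (X : R[X]) - C (d i) := by
    ext i j
    by_cases h : i = j <;> simp [charmatrix_apply, diagonal_apply, h]
  rw [this, Matrix.det_diagonal]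

lemma charpoly_eq_prod_eigenvalues {k : Type*} [Fintype k] [DecidableEq k]
    {A : Matrix k k ℝ} (hA : A.IsHermitian) :
    A.charpoly = ∏ i, (X - C (hA.eigenvalues i)) := by
  have hspec := hA.spectral_theorem
  have hd : (diagonal (RCLike.ofReal ∘ hA.eigenvalues) : Matrix k k ℝ) = diagonal hA.eigenvalues := by
    congr 1
  rw [show A.charpoly = (diagonal hA.eigenvalues).charpoly from ?_, _root_.charpoly_diagonal]
  conv_lhs => rw [hspec]
  rw [Unitary.conjStarAlgAut_apply, hd]
  exact charpoly_conj_eq _ _ _ (Unitary.coe_mul_star_self _) (Unitary.coe_star_mul_self _)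

section Schur
variable {F : Type*} [Field F]

noncomputable def invSmulOne {k : Type*} [Fintype k] [DecidableEq k] {x : F} (hx : x ≠ 0) :
    Invertible (x • (1 : Matrix k k F)) :=
  ⟨x⁻¹ • 1, by rw [smul_mul_smul_comm, inv_mul_cancel₀ hx, one_mul, one_smul],
    by rw [smul_mul_smul_comm, mul_inv_cancel₀ hx, one_mul, one_smul]⟩

lemma det_smul_one_sub_mul_comm {m n : Type*} [Fintype m] [Fintype n] [DecidableEq m]
    [DecidableEq n] (A : Matrix m n F) (B : Matrix n m F) {x : F} (hx : x ≠ 0) :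
    (x • 1 - A * B).det * x ^ Fintype.card n = (x • 1 - B * A).det * x ^ Fintype.card m := by
  haveI := invSmulOne (k := m) hx
  haveI : Invertible (1 : Matrix n n F) := invertibleOne
  have h22 := Matrix.det_fromBlocks₂₂ (x • 1 : Matrix m m F) A B (1 : Matrix n n F)
  have h11 := Matrix.det_fromBlocks₁₁ (x • 1 : Matrix m m F) A B (1 : Matrix n n F)
  rw [invOf_one, Matrix.mul_one, Matrix.det_one, one_mul] at h22
  have hinv : (⅟(x • 1 : Matrix m m F) : Matrix m m F) = x⁻¹ • 1 := by
    apply invOf_eq_right_inv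
    rw [smul_mul_smul_comm, mul_inv_cancel₀ hx, one_mul, one_smul]
  rw [hinv] at h11
  have hBA : B * (x⁻¹ • (1 : Matrix m m F)) * A = x⁻¹ • (B * A) := by
    rw [Matrix.mul_smul, Matrix.mul_one, Matrix.smul_mul]
  rw [hBA] at h11
  have hdet1 : (x • 1 - B * A).det = x ^ Fintype.card n * ((1 : Matrix n n F) - x⁻¹ • (B * A)).det := by
    rw [← Matrix.det_smul, smul_sub, smul_smul, mul_inv_cancel₀ hx, one_smul]
  have hdetx : (x • (1 : Matrix m m F)).det = x ^ Fintype.card m := by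
    rw [Matrix.det_smul, Matrix.det_one, mul_one]
  rw [← h22, h11, hdetx, hdet1]
  ring

end Schur

lemma det_fromBlocks_smul_one {F : Type*} [Field F] {m n : Type*} [Fintype m] [Fintype n]
    [DecidableEq m] [DecidableEq n] (A : Matrix m n F) (B : Matrix n m F) {y : F} (hy : y ≠ 0) :
    (fromBlocks (y • 1) A B (y • 1)).det * y ^ Fintype.card n
      = y ^ Fintype.card m * ((y * y) • (1 : Matrix n n F) - B * A).det := by
  haveI := invSmulOne (k := m) hy
  have h11 := Matrix.det_fromBlocks₁₁ (y • 1 : Matrix m m F) A B (y • 1 : Matrix n n F)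
  have hinv : (⅟(y • 1 : Matrix m m F) : Matrix m m F) = y⁻¹ • 1 := by
    apply invOf_eq_right_inv
    rw [smul_mul_smul_comm, mul_inv_cancel₀ hy, one_mul, one_smul]
  rw [hinv] at h11
  have hBA : B * (y⁻¹ • (1 : Matrix m m F)) * A = y⁻¹ • (B * A) := by
    rw [Matrix.mul_smul, Matrix.mul_one, Matrix.smul_mul]
  rw [hBA] at h11
  have hdet1 : ((y * y) • (1 : Matrix n n F) - B * A).det
      = y ^ Fintype.card n * ((y • 1 : Matrix n n F) - y⁻¹ • (B * A)).det := by
    rw [← Matrix.det_smul, smul_sub, smul_smul, smul_smul, mul_inv_cancel₀ hy, one_smul]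
  have hdety : (y • (1 : Matrix m m F)).det = y ^ Fintype.card m := by
    rw [Matrix.det_smul, Matrix.det_one, mul_one]
  rw [h11, hdet1, hdety]
  ring

section Count
open Multiset

lemma multiset_map_perm {k : ℕ} {α : Type*} (f : Fin k → α) (σ : Equiv.Perm (Fin k)) :
    Finset.univ.val.map (f ∘ σ) = Finset.univ.val.map f := by
  rw [← Multiset.map_map]
  congr 1
  conv_rhs => rw [← congr_arg Finset.val (Finset.map_univ_equiv σ)]
  rw [Finset.map_val, Equiv.coe_toEmbedding]

lemma cnt {k : ℕ} {g : Fin k → ℝ} (hg : Monotone g) (c : ℝ) (j : Fin k) :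
    c ≤ g j.rev ↔ (j : ℕ) < Multiset.countP (fun a => c ≤ a) (Finset.univ.val.map g) := by
  have hanti : Antitone (g ∘ Fin.rev) := fun a b hab => hg (Fin.rev_le_rev.mpr hab)
  have h := Tuple.lt_card_ge_iff_apply_ge_of_antitone (f := g ∘ Fin.rev) (a := c) (j := j) hanti
  rw [← Fintype.card_subtype] at h
  simp only [Function.comp_apply] at h
  rw [← h]
  have hc : Fintype.card {i : Fin k // c ≤ g i.rev} = Fintype.card {i : Fin k // c ≤ g i} :=
    Fintype.card_congr (Equiv.subtypeEquiv Fin.revPerm (fun a => by simp))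
  have hcount : Multiset.countP (fun a => c ≤ a) (Finset.univ.val.map g)
      = Fintype.card {i // c ≤ g i} := by
    rw [Multiset.countP_map, Fintype.card_subtype]
    simp [Finset.card_def, Multiset.countP_eq_card_filter, Finset.filter]
  rw [hcount, hc]
end Count

section PI
open Polynomial

lemma scalar_eq_smul_one {k : Type*} [Fintype k] [DecidableEq k] {R : Type*} [CommRing R] (x : R) :
    Matrix.scalar k x = x • (1 : Matrix k k R) := by
  rw [Matrix.scalar_apply, Matrix.smul_one_eq_diagonal]

lemma key_pi {n p q : ℕ} (V1 : Matrix (Fin n) (Fin p) ℝ) (V2 : Matrix (Fin n) (Fin q) ℝ)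
    (h1 : V1ᵀ * V1 = 1) (h2 : V2ᵀ * V2 = 1)
    (hν : ((Matrix.fromRows V1ᵀ V2ᵀ)ᴴ * Matrix.fromRows V1ᵀ V2ᵀ).IsHermitian)
    (hμ : ((V1ᵀ * V2)ᴴ * (V1ᵀ * V2)).IsHermitian) :
    X ^ (p + q) * (∏ i, (X - C (hν.eigenvalues i))) * (X - 1) ^ q
      = X ^ n * (X - 1) ^ p * ∏ j, ((X - 1) ^ 2 - C (hμ.eigenvalues j)) := by
  classical
  set M : Matrix (Fin p ⊕ Fin q) (Fin n) ℝ := Matrix.fromRows V1ᵀ V2ᵀ with hMdef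
  set B : Matrix (Fin p) (Fin q) ℝ := V1ᵀ * V2 with hBdef
  set F := FractionRing (Polynomial ℝ)
  set φ : ℝ[X] →+* F := algebraMap ℝ[X] F with hφdef
  have hinj : Function.Injective φ := IsFractionRing.injective ℝ[X] F
  apply hinj
  set ψ : ℝ →+* F := φ.comp C with hψdef
  set x : F := φ X with hxdef
  have hx : x ≠ 0 := by
    rw [hxdef, ← map_zero φ]
    exact fun h => Polynomial.X_ne_zero (hinj h)
  have hy : x - 1 ≠ 0 := by
    have hX1 : (X - 1 : ℝ[X]) ≠ 0 := by simpa using Polynomial.X_sub_C_ne_zero (1 : ℝ)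
    rw [hxdef, ← map_one φ, ← map_sub φ]
    exact fun h => hX1 (hinj (by rw [h, map_zero]))
  -- conjTranspose is transpose over ℝ
  have hct : ∀ {a b : Type} [Fintype a] [Fintype b] (A : Matrix a b ℝ), Aᴴ = Aᵀ := fun A =>
    Matrix.conjTranspose_eq_transpose_of_trivial A
  -- step 1 : relate charpolys of MᴴM and MMᴴ
  have hmapmul : ∀ {a b c : Type} [Fintype a] [Fintype b] [Fintype c]
      (A : Matrix a b ℝ) (B' : Matrix b c ℝ), (A * B').map ψ = A.map ψ * B'.map ψ := by
    intro a b c _ _ _ A B'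
    exact Matrix.map_mul
  have step1 : ((Mᴴ * M).map ψ |> fun G => ((x • 1 - G).det)) * x ^ (p + q)
      = (x • 1 - (M * Mᴴ).map ψ).det * x ^ n := by
    have := det_smul_one_sub_mul_comm (Mᴴ.map ψ) (M.map ψ) hx
    simpa [hmapmul, Fintype.card_sum] using this
  -- step 2 : block structure of M * Mᴴ
  have step2 : M * Mᴴ = Matrix.fromBlocks 1 B Bᵀ 1 := by
    rw [hct M, hMdef, Matrix.transpose_fromRows, Matrix.transpose_transpose,
      Matrix.transpose_transpose, Matrix.fromRows_mul_fromCols, h1, h2, hBdef,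
      Matrix.transpose_mul, Matrix.transpose_transpose]
  -- step 3 : the shifted matrix as blocks
  have step3 : x • (1 : Matrix (Fin p ⊕ Fin q) (Fin p ⊕ Fin q) F) - (M * Mᴴ).map ψ
      = Matrix.fromBlocks ((x - 1) • 1) (-(B.map ψ)) (-(Bᵀ.map ψ)) ((x - 1) • 1) := by
    rw [step2, Matrix.fromBlocks_map, ← Matrix.fromBlocks_one, Matrix.fromBlocks_smul,
      Matrix.map_one _ (map_zero ψ) (map_one ψ), Matrix.map_one _ (map_zero ψ) (map_one ψ)]
    rw [sub_eq_add_neg, Matrix.fromBlocks_neg, Matrix.fromBlocks_add]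
    congr 1 <;> simp [sub_smul, sub_eq_add_neg, add_smul, neg_smul]
  -- step 4 : Schur complement determinant
  have step4 : (x • (1 : Matrix (Fin p ⊕ Fin q) (Fin p ⊕ Fin q) F) - (M * Mᴴ).map ψ).det
        * (x - 1) ^ q
      = (x - 1) ^ p * (((x - 1) * (x - 1)) • 1 - ((V1ᵀ * V2)ᴴ * (V1ᵀ * V2)).map ψ).det := by
    rw [step3]
    have := det_fromBlocks_smul_one (-(B.map ψ)) (-(Bᵀ.map ψ)) hy
    rw [Matrix.neg_mul, Matrix.mul_neg, neg_neg] at this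
    simp only [Fintype.card_fin] at this
    rw [this, hct (V1ᵀ * V2), hmapmul (V1ᵀ * V2)ᵀ (V1ᵀ * V2)]
  -- step 5 : evaluate charpoly of BᴴB at (x-1)²
  have step5 : (((x - 1) * (x - 1)) • (1 : Matrix (Fin q) (Fin q) F)
        - ((V1ᵀ * V2)ᴴ * (V1ᵀ * V2)).map ψ).det
      = ∏ j, ((x - 1) * (x - 1) - ψ (hμ.eigenvalues j)) := by
    set ε : ℝ[X] →+* F := Polynomial.eval₂RingHom ψ ((x - 1) * (x - 1)) with hεdef
    have hev := charpoly_map_ringHom ((V1ᵀ * V2)ᴴ * (V1ᵀ * V2)) ε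
    have hεX : ε X = (x - 1) * (x - 1) := by simp [hεdef]
    have hεC : ε.comp C = ψ := by ext r; simp [hεdef]
    rw [hεX, hεC, scalar_eq_smul_one] at hev
    rw [← hev, charpoly_eq_prod_eigenvalues hμ, map_prod]
    refine Finset.prod_congr rfl fun j _ => ?_
    rw [map_sub, hεdef]
    simp
  -- now put everything together
  have hchar1 := charpoly_eq_prod_eigenvalues hν
  have hev1 := charpoly_map_ringHom (Mᴴ * M) φ
  rw [scalar_eq_smul_one] at hev1
  have hφprod : φ (∏ i, (X - C (hν.eigenvalues i))) = (x • 1 - (Mᴴ * M).map ψ).det := by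
    rw [← hchar1, hev1]
  rw [_root_.map_mul, _root_.map_mul, _root_.map_mul, _root_.map_mul, map_pow, map_pow,
    map_pow, map_pow, map_sub, _root_.map_one, hφprod, map_prod]
  have hrhs : ∀ j, φ ((X - 1) ^ 2 - C (hμ.eigenvalues j))
      = (x - 1) * (x - 1) - ψ (hμ.eigenvalues j) := by
    intro j
    rw [map_sub, map_pow, map_sub, _root_.map_one, sq]
    rfl
  calc x ^ (p + q) * (x • 1 - (Mᴴ * M).map ψ).det * (x - 1) ^ q
      = ((x • 1 - (Mᴴ * M).map ψ).det * x ^ (p + q)) * (x - 1) ^ q := by ring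
    _ = ((x • 1 - (M * Mᴴ).map ψ).det * x ^ n) * (x - 1) ^ q := by rw [step1]
    _ = x ^ n * ((x • 1 - (M * Mᴴ).map ψ).det * (x - 1) ^ q) := by ring
    _ = x ^ n * ((x - 1) ^ p * (((x - 1) * (x - 1)) • 1
          - ((V1ᵀ * V2)ᴴ * (V1ᵀ * V2)).map ψ).det) := by rw [step4]
    _ = x ^ n * (x - 1) ^ p * ∏ j, ((x - 1) * (x - 1) - ψ (hμ.eigenvalues j)) := by
        rw [step5]; ring
    _ = x ^ n * (x - 1) ^ p * ∏ j, φ ((X - 1) ^ 2 - C (hμ.eigenvalues j)) := by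
        rw [Finset.prod_congr rfl fun j _ => (hrhs j).symm]

end PI

section MS
open Polynomial Multiset

lemma prod_XsubC_multiset (s : Multiset ℝ) :
    (s.map fun a => (X : ℝ[X]) - C a).prod = (s.map fun a => X - C a).prod := rfl

lemma key_multiset {n p q : ℕ} (V1 : Matrix (Fin n) (Fin p) ℝ) (V2 : Matrix (Fin n) (Fin q) ℝ)
    (h1 : V1ᵀ * V1 = 1) (h2 : V2ᵀ * V2 = 1)
    (hν : ((Matrix.fromRows V1ᵀ V2ᵀ)ᴴ * Matrix.fromRows V1ᵀ V2ᵀ).IsHermitian)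
    (hμ : ((V1ᵀ * V2)ᴴ * (V1ᵀ * V2)).IsHermitian) :
    (Finset.univ.val.map hν.eigenvalues) + Multiset.replicate (p + q) (0 : ℝ)
        + Multiset.replicate q 1
      = (Finset.univ.val.map fun j => 1 + Real.sqrt (hμ.eigenvalues j))
        + ((Finset.univ.val.map fun j => 1 - Real.sqrt (hμ.eigenvalues j))
          + Multiset.replicate n (0 : ℝ) + Multiset.replicate p 1) := by
  classical
  have hμ0 : ∀ j, 0 ≤ hμ.eigenvalues j := fun j =>
    (Matrix.posSemidef_conjTranspose_mul_self (V1ᵀ * V2)).eigenvalues_nonneg j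
  have hfac : ∀ t : ℝ, 0 ≤ t → ((X : ℝ[X]) - 1) ^ 2 - C t
      = (X - C (1 + Real.sqrt t)) * (X - C (1 - Real.sqrt t)) := by
    intro t ht
    have hs : Real.sqrt t * Real.sqrt t = t := Real.mul_self_sqrt ht
    have hC : C t = C (Real.sqrt t) * C (Real.sqrt t) := by rw [← C_mul, hs]
    rw [hC, C_add, C_sub, C_1]
    ring
  have PI := key_pi V1 V2 h1 h2 hν hμ
  rw [Finset.prod_congr rfl (fun j _ => hfac _ (hμ0 j)), Finset.prod_mul_distrib] at PI
  -- convert to multiset products of (X - C a)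
  have conv : ∀ (s : Multiset ℝ), (s.map fun a => (X : ℝ[X]) - C a).prod
      = (s.map fun a => (X : ℝ[X]) - C a).prod := fun _ => rfl
  have key : ∀ (s t : Multiset ℝ),
      (s.map fun a => (X : ℝ[X]) - C a).prod = (t.map fun a => (X : ℝ[X]) - C a).prod → s = t := by
    intro s t h
    have := congrArg Polynomial.roots h
    rwa [roots_multiset_prod_X_sub_C, roots_multiset_prod_X_sub_C] at this
  apply key
  have e0 : ∀ (k : ℕ), ((Multiset.replicate k (0:ℝ)).map fun a => (X : ℝ[X]) - C a).prod
      = X ^ k := by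
    intro k
    rw [Multiset.map_replicate, Multiset.prod_replicate, C_0, sub_zero]
  have e1 : ∀ (k : ℕ), ((Multiset.replicate k (1:ℝ)).map fun a => (X : ℝ[X]) - C a).prod
      = (X - 1) ^ k := by
    intro k
    rw [Multiset.map_replicate, Multiset.prod_replicate, C_1]
  have efin : ∀ {k : ℕ} (f : Fin k → ℝ),
      ((Finset.univ.val.map f).map fun a => (X : ℝ[X]) - C a).prod = ∏ i, (X - C (f i)) := by
    intro k f
    rw [Multiset.map_map, Finset.prod_eq_multiset_prod]
    rfl
  simp only [Multiset.map_add, Multiset.prod_add, e0, e1, efin]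
  calc (∏ i, ((X:ℝ[X]) - C (hν.eigenvalues i))) * X ^ (p + q) * (X - 1) ^ q
      = X ^ (p + q) * (∏ i, ((X:ℝ[X]) - C (hν.eigenvalues i))) * (X - 1) ^ q := by ring
    _ = X ^ n * (X - 1) ^ p * ((∏ j, ((X:ℝ[X]) - C (1 + Real.sqrt (hμ.eigenvalues j))))
          * ∏ j, ((X:ℝ[X]) - C (1 - Real.sqrt (hμ.eigenvalues j)))) := PI
    _ = (∏ j, ((X:ℝ[X]) - C (1 + Real.sqrt (hμ.eigenvalues j))))
        * ((∏ j, ((X:ℝ[X]) - C (1 - Real.sqrt (hμ.eigenvalues j)))) * X ^ n * (X - 1) ^ p) := by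
          ring

end MS

section Final
open Multiset

lemma countP_replicate (pr : ℝ → Prop) [DecidablePred pr] (k : ℕ) (a : ℝ) :
    countP pr (replicate k a) = if pr a then k else 0 := by
  induction k with
  | zero => simp
  | succ k ih =>
      rw [Multiset.replicate_succ, Multiset.countP_cons, ih]
      split_ifs <;> simp

theorem stacked_sval_sq_eq_one_add_cos' (n p q : ℕ) (hpn : p ≤ n) (hqn : q ≤ n)
    (V1 : Matrix (Fin n) (Fin p) ℝ) (V2 : Matrix (Fin n) (Fin q) ℝ)
    (h1 : V1ᵀ * V1 = 1) (h2 : V2ᵀ * V2 = 1)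
    (i : Fin (min p q)) :
    (Real.sqrt (((Matrix.isHermitian_transpose_mul_self (Matrix.fromRows V1ᵀ V2ᵀ)).eigenvalues ∘
        Tuple.sort (Matrix.isHermitian_transpose_mul_self (Matrix.fromRows V1ᵀ V2ᵀ)).eigenvalues)
        (Fin.castLE (le_trans (min_le_left p q) hpn) i).rev)) ^ 2
      = 1 + Real.sqrt (((Matrix.isHermitian_transpose_mul_self (V1ᵀ * V2)).eigenvalues ∘
        Tuple.sort (Matrix.isHermitian_transpose_mul_self (V1ᵀ * V2)).eigenvalues)
        (Fin.castLE (min_le_right p q) i).rev) := by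
  classical
  set ν : Fin n → ℝ := (Matrix.isHermitian_transpose_mul_self (Matrix.fromRows V1ᵀ V2ᵀ)).eigenvalues
    with hνdef
  set μ : Fin q → ℝ := (Matrix.isHermitian_transpose_mul_self (V1ᵀ * V2)).eigenvalues with hμdef
  set g : Fin n → ℝ := ν ∘ Tuple.sort ν with hgdef
  set gB : Fin q → ℝ := μ ∘ Tuple.sort μ with hgBdef
  have hg : Monotone g := Tuple.monotone_sort ν
  have hgB : Monotone gB := Tuple.monotone_sort μ
  have hgnn : ∀ t, 0 ≤ g t := fun t =>
    Matrix.eigenvalues_conjTranspose_mul_self_nonneg (Matrix.fromRows V1ᵀ V2ᵀ) _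
  have hgBnn : ∀ t, 0 ≤ gB t := fun t =>
    Matrix.eigenvalues_conjTranspose_mul_self_nonneg (V1ᵀ * V2) _
  set h : Fin q → ℝ := fun t => 1 + Real.sqrt (gB t) with hhdef
  have hh : Monotone h := fun a b hab => by
    have := Real.sqrt_le_sqrt (hgB hab)
    simp only [hhdef]
    linarith
  set j : Fin n := Fin.castLE (le_trans (min_le_left p q) hpn) i with hjdef
  set jq : Fin q := Fin.castLE (min_le_right p q) i with hjqdef
  -- goal reduces to g j.rev = h jq.rev
  suffices hkey : g j.rev = h jq.rev by
    rw [Real.sq_sqrt (hgnn _), hkey]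
  -- multiset identity
  have hMS := key_multiset V1 V2 h1 h2 (Matrix.isHermitian_transpose_mul_self _)
    (Matrix.isHermitian_transpose_mul_self _)
  -- counting functions
  set N : ℝ → ℕ := fun c => countP (fun a => c ≤ a) (Finset.univ.val.map ν) with hNdef
  set Q : ℝ → ℕ := fun c => countP (fun a => c ≤ a)
    (Finset.univ.val.map fun t => 1 + Real.sqrt (μ t)) with hQdef
  set R : ℝ → ℕ := fun c => countP (fun a => c ≤ a)
    (Finset.univ.val.map fun t => 1 - Real.sqrt (μ t)) with hRdef
  have hcountEq : ∀ c : ℝ, (N c + (if c ≤ (0:ℝ) then p + q else 0)) + (if c ≤ (1:ℝ) then q else 0)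
      = Q c + ((R c + (if c ≤ (0:ℝ) then n else 0)) + (if c ≤ (1:ℝ) then p else 0)) := by
    intro c
    have hcc := congrArg (countP (fun a => c ≤ a)) hMS
    rw [Multiset.countP_add, Multiset.countP_add, Multiset.countP_add, Multiset.countP_add,
      Multiset.countP_add, countP_replicate, countP_replicate, countP_replicate,
      countP_replicate] at hcc
    exact hcc
  have hQle : ∀ c, Q c ≤ q := by
    intro c
    calc Q c ≤ Multiset.card (Finset.univ.val.map fun t => 1 + Real.sqrt (μ t)) :=
          Multiset.countP_le_card _ _
      _ = q := by rw [Multiset.card_map]; exact Finset.card_univ.trans (Fintype.card_fin q)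
  have hQ1 : Q 1 = q := by
    simp only [hQdef]
    have : ∀ a ∈ Finset.univ.val.map fun t => 1 + Real.sqrt (μ t), (1:ℝ) ≤ a := by
      intro a ha
      obtain ⟨t, _, rfl⟩ := Multiset.mem_map.mp ha
      have := Real.sqrt_nonneg (μ t)
      linarith
    rw [Multiset.countP_eq_card.mpr this, Multiset.card_map]
    exact Finset.card_univ.trans (Fintype.card_fin q)
  have hR0 : ∀ c, 1 < c → R c = 0 := by
    intro c hc
    simp only [hRdef]
    rw [Multiset.countP_eq_zero]
    intro a ha
    obtain ⟨t, _, rfl⟩ := Multiset.mem_map.mp ha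
    have := Real.sqrt_nonneg (μ t)
    push_neg
    linarith
  have hNQ : ∀ c, 1 < c → N c = Q c := by
    intro c hc
    have h0 : ¬ (c ≤ (0:ℝ)) := by linarith
    have h1' : ¬ (c ≤ (1:ℝ)) := by linarith
    have hc2 := hcountEq c
    rw [if_neg h0, if_neg h0, if_neg h1', if_neg h1', hR0 c hc] at hc2
    simpa using hc2
  have hN1 : p ≤ N 1 := by
    have hc2 := hcountEq 1
    rw [if_neg (by norm_num : ¬ ((1:ℝ) ≤ 0)), if_neg (by norm_num : ¬ ((1:ℝ) ≤ 0)),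
      if_pos le_rfl, if_pos le_rfl, hQ1] at hc2
    omega
  -- bridges
  have hcg : ∀ c : ℝ, c ≤ g j.rev ↔ (i : ℕ) < N c := by
    intro c
    have hmapg : Finset.univ.val.map g = Finset.univ.val.map ν := by
      rw [hgdef]; exact multiset_map_perm ν (Tuple.sort ν)
    have hbase := cnt hg c j
    rw [hmapg] at hbase
    exact hbase
  have hmaph : Finset.univ.val.map h = Finset.univ.val.map fun t => 1 + Real.sqrt (μ t) := by
    calc Finset.univ.val.map h
        = Multiset.map (fun t => 1 + Real.sqrt t) (Finset.univ.val.map gB) := by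
          rw [Multiset.map_map]; rfl
      _ = Multiset.map (fun t => 1 + Real.sqrt t) (Finset.univ.val.map μ) := by
          rw [hgBdef, multiset_map_perm μ (Tuple.sort μ)]
      _ = Finset.univ.val.map fun t => 1 + Real.sqrt (μ t) := by rw [Multiset.map_map]; rfl
  have hch : ∀ c : ℝ, c ≤ h jq.rev ↔ (i : ℕ) < Q c := by
    intro c
    have hbase := cnt hh c jq
    rw [hmaph] at hbase
    exact hbase
  have hb1 : 1 ≤ h jq.rev := by
    have := Real.sqrt_nonneg (gB jq.rev)
    simp only [hhdef]
    linarith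
  have hip : (i : ℕ) < p := lt_of_lt_of_le i.2 (min_le_left p q)
  apply le_antisymm
  · by_contra hlt
    push_neg at hlt
    have h1lt : 1 < g j.rev := lt_of_le_of_lt hb1 hlt
    have hiN : (i : ℕ) < N (g j.rev) := (hcg _).mp le_rfl
    rw [hNQ _ h1lt] at hiN
    exact absurd ((hch _).mpr hiN) (not_le.mpr hlt)
  · by_contra hlt
    push_neg at hlt
    rcases lt_or_eq_of_le hb1 with hb | hb
    · have hiQ : (i : ℕ) < Q (h jq.rev) := (hch _).mp le_rfl
      rw [← hNQ _ hb] at hiQ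
      exact absurd ((hcg _).mpr hiQ) (not_le.mpr hlt)
    · have : (i : ℕ) < N 1 := lt_of_lt_of_le hip hN1
      have h1le : (1:ℝ) ≤ g j.rev := (hcg 1).mpr this
      rw [← hb] at hlt
      exact absurd h1le (not_le.mpr hlt)

end Final

end Aux

/-- for orthonormal basis matrices `V₁` (`n × p`) and `V₂` (`n × q`) and
the stacked matrix `M = [V₁ᵀ; V₂ᵀ]`, the `i`-th (largest) singular value of `M` satisfies
`σᵢ² = 1 + cos φᵢ` for `i < min p q`, where `cos φᵢ` is the `i`-th largest singular value
of `V₁ᵀ V₂`; equivalently `φᵢ = arccos (σᵢ² − 1)`. -/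
theorem stacked_sval_sq_eq_one_add_cos (n p q : ℕ) (hpn : p ≤ n) (hqn : q ≤ n)
    (V1 : Matrix (Fin n) (Fin p) ℝ) (V2 : Matrix (Fin n) (Fin q) ℝ)
    (h1 : V1ᵀ * V1 = 1) (h2 : V2ᵀ * V2 = 1)
    (M : Matrix (Fin p ⊕ Fin q) (Fin n) ℝ) (hM : M = Matrix.fromRows V1ᵀ V2ᵀ)
    (i : Fin (min p q)) :
    svalDesc M (Fin.castLE (le_trans (min_le_left p q) hpn) i) ^ 2
      = 1 + svalDesc (V1ᵀ * V2) (Fin.castLE (min_le_right p q) i) ∧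
    Real.arccos (svalDesc M (Fin.castLE (le_trans (min_le_left p q) hpn) i) ^ 2 - 1)
      = Real.arccos (svalDesc (V1ᵀ * V2) (Fin.castLE (min_le_right p q) i)) := by
  subst hM
  have hmain := stacked_sval_sq_eq_one_add_cos' n p q hpn hqn V1 V2 h1 h2 i
  have hm2 : svalDesc (Matrix.fromRows V1ᵀ V2ᵀ) (Fin.castLE (le_trans (min_le_left p q) hpn) i) ^ 2
      = 1 + svalDesc (V1ᵀ * V2) (Fin.castLE (min_le_right p q) i) := hmain
  exact ⟨hm2, by rw [hm2, add_sub_cancel_left]⟩
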